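/- Let π be a 132-avoiding permutation of length n, and for 0 ≤ i ≤ n let τ_i be the output of the insertion step at position i applied to π. Then the n+1 pairs (|τ_i|, short(τ_i)) are pairwise distinct, where short(σ) denotes the number of short values of σ; that is, the n+1 outputs of the insertion steps all belong to different sets A(m,s). -/

import Mathlib

open List

attribute [local instance] Classical.propDecidable

/-- `l` is a permutation of length `n`, i.e. a list containing each of `1,…,n` exactly once. -/
def IsPermList (n : ℕ) (l : List ℕ) : Prop :=
  l.Perm (List.range' 1 n)

/-- Two sequences (with distinct entries) are order-isomorphic: same length and the same
pairwise order relations. -/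
def OrderIsoList (a b : List ℕ) : Prop :=
  a.length = b.length ∧
    ∀ i j, i < j → j < a.length →
      (a.getD i 0 < a.getD j 0 ↔ b.getD i 0 < b.getD j 0)

/-- `l` contains the pattern `p`: some subsequence of `l` is order-isomorphic to `p`. -/
def ContainsPat (l p : List ℕ) : Prop :=
  ∃ s, s.Sublist l ∧ OrderIsoList s p

/-- `l` avoids the pattern `p`. -/
def AvoidsPat (l p : List ℕ) : Prop := ¬ ContainsPat l p

/-- Relabel the entries of a list of distinct naturals order-isomorphically with `1,…,m`. -/
def standardize (l : List ℕ) : List ℕ :=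
  l.map fun x => (l.filter fun y => y ≤ x).length

/-- Insert the new maximum value `l.length + 1` immediately after the first `i` entries. -/
def insertMax (l : List ℕ) (i : ℕ) : List ℕ :=
  l.take i ++ (l.length + 1) :: l.drop i

/-- The insertion step at position `i` for the pattern `p`: insert a new maximum after the
first `i` entries, keep the longest prefix avoiding `p` (i.e. remove the minimal suffix so
that the result avoids `p`), then standardize. -/
noncomputable def insStep (p l : List ℕ) (i : ℕ) : List ℕ :=
  standardize ((insertMax l i).take
    (Nat.findGreatest (fun k => AvoidsPat ((insertMax l i).take k) p)
      (insertMax l i).length))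

/-- The entry at (0-indexed) position `i` of `l` is a right-to-left maximum: it is larger
than every entry to its right. -/
def IsRLMax (l : List ℕ) (i : ℕ) : Prop :=
  ∀ j, i < j → j < l.length → l.getD j 0 < l.getD i 0

/-- The number of short values of `l`: entries that are not right-to-left maxima. -/
noncomputable def shortCount (l : List ℕ) : ℕ :=
  {i | i < l.length ∧ ¬ IsRLMax l i}.ncard

-- ## standardize lemmas

lemma std_length (l : List ℕ) : (standardize l).length = l.length := by
  simp [standardize]

lemma filt_mono {l : List ℕ} {x y : ℕ} (hxy : x ≤ y) :
    (l.filter fun z => z ≤ x).length ≤ (l.filter fun z => z ≤ y).length := by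
  rw [← List.countP_eq_length_filter, ← List.countP_eq_length_filter]
  exact List.countP_mono_left (fun a _ hax => by
    simp only [decide_eq_true_eq] at *; omega)

lemma filt_strict {l : List ℕ} {x y : ℕ} (hy : y ∈ l) (hxy : x < y) :
    (l.filter fun z => z ≤ x).length < (l.filter fun z => z ≤ y).length := by
  obtain ⟨s, t, rfl⟩ := List.append_of_mem hy
  have h1 : (s.filter fun z => z ≤ x).length ≤ (s.filter fun z => z ≤ y).length :=
    filt_mono hxy.le
  have h2 : (t.filter fun z => z ≤ x).length ≤ (t.filter fun z => z ≤ y).length :=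
    filt_mono hxy.le
  simp only [List.filter_append, List.filter_cons, decide_eq_true_eq, length_append]
  rw [if_neg (by omega), if_pos (le_refl y)]
  simp only [length_cons]
  omega

lemma filt_iff {l : List ℕ} {a b : ℕ} (hb : b ∈ l) :
    (l.filter fun z => z ≤ a).length < (l.filter fun z => z ≤ b).length ↔ a < b := by
  constructor
  · intro h
    by_contra hab
    push_neg at hab
    exact absurd h (not_lt.mpr (filt_mono hab))
  · exact filt_strict hb

lemma std_getD_iff {l : List ℕ} {i j : ℕ} (hi : i < l.length) (hj : j < l.length) :
    (standardize l).getD i 0 < (standardize l).getD j 0 ↔ l.getD i 0 < l.getD j 0 := by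
  have hi' : i < (standardize l).length := by rwa [std_length]
  have hj' : j < (standardize l).length := by rwa [std_length]
  rw [List.getD_eq_getElem _ _ hi', List.getD_eq_getElem _ _ hj',
    List.getD_eq_getElem _ _ hi, List.getD_eq_getElem _ _ hj]
  have e : ∀ k (hk : k < (standardize l).length) (hk2 : k < l.length),
      (standardize l)[k] = (l.filter fun y => y ≤ l[k]).length := fun k hk hk2 => by
    simp [standardize]
  rw [e i hi' hi, e j hj' hj]
  exact filt_iff (List.getElem_mem hj)

lemma isRLMax_std {l : List ℕ} (k : ℕ) : IsRLMax (standardize l) k ↔ IsRLMax l k := by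
  unfold IsRLMax
  rw [std_length]
  refine forall_congr' fun j => ?_
  refine imp_congr_right fun hkj => imp_congr_right fun hjl => ?_
  exact std_getD_iff hjl (hkj.trans hjl)

lemma shortCount_std (l : List ℕ) : shortCount (standardize l) = shortCount l := by
  unfold shortCount
  congr 1
  ext k
  simp [std_length, isRLMax_std]

-- ## shortCount structure lemmas

lemma isRLMax_cons_succ {x : ℕ} {l : List ℕ} {k : ℕ} :
    IsRLMax (x :: l) (k + 1) ↔ IsRLMax l k := by
  unfold IsRLMax
  constructor
  · intro h j hkj hjl
    have := h (j + 1) (by omega) (by simp; omega)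
    simpa using this
  · intro h j hkj hjl
    obtain ⟨j', rfl⟩ : ∃ j', j = j' + 1 := ⟨j - 1, by omega⟩
    have := h j' (by omega) (by simp at hjl; omega)
    simpa using this

lemma isRLMax_cons_zero {x : ℕ} {l : List ℕ} :
    IsRLMax (x :: l) 0 ↔ ∀ y ∈ l, y < x := by
  unfold IsRLMax
  constructor
  · intro h y hy
    obtain ⟨j, hj, rfl⟩ := List.mem_iff_getElem.mp hy
    have := h (j + 1) (by omega) (by simp; omega)
    rw [List.getD_cons_succ, List.getD_cons_zero, List.getD_eq_getElem _ _ hj] at this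
    exact this
  · intro h j hj hjl
    obtain ⟨j', rfl⟩ : ∃ j', j = j' + 1 := ⟨j - 1, by omega⟩
    have hj'l : j' < l.length := by simp at hjl; omega
    simp only [List.getD_cons_succ, List.getD_cons_zero]
    rw [List.getD_eq_getElem _ _ hj'l]
    exact h _ (List.getElem_mem hj'l)

lemma shortCount_cons (x : ℕ) (l : List ℕ) :
    shortCount (x :: l) = (if ∀ y ∈ l, y < x then 0 else 1) + shortCount l := by
  unfold shortCount
  have hfin : {i | i < l.length ∧ ¬ IsRLMax l i}.Finite :=
    (Set.finite_Iio l.length).subset (fun k hk => hk.1)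
  by_cases hc : ∀ y ∈ l, y < x
  · have hset : {i | i < (x :: l).length ∧ ¬ IsRLMax (x :: l) i} =
        (· + 1) '' {i | i < l.length ∧ ¬ IsRLMax l i} := by
      ext k
      cases k with
      | zero =>
        simp only [Set.mem_setOf_eq, Set.mem_image]
        constructor
        · rintro ⟨-, hmax⟩
          exact absurd (isRLMax_cons_zero.mpr hc) hmax
        · rintro ⟨a, -, hk⟩; omega
      | succ k' =>
        simp only [Set.mem_setOf_eq, Set.mem_image, length_cons]
        constructor
        · rintro ⟨hlt, hmax⟩
          exact ⟨k', ⟨by omega, fun hm => hmax (isRLMax_cons_succ.mpr hm)⟩, rfl⟩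
        · rintro ⟨a, ⟨ha, hm⟩, hk⟩
          obtain rfl : a = k' := by omega
          exact ⟨by omega, fun hmm => hm (isRLMax_cons_succ.mp hmm)⟩
    rw [hset, Set.ncard_image_of_injective _ (fun a b hab => by omega), if_pos hc, Nat.zero_add]
  · have hset : {i | i < (x :: l).length ∧ ¬ IsRLMax (x :: l) i} =
        insert 0 ((· + 1) '' {i | i < l.length ∧ ¬ IsRLMax l i}) := by
      ext k
      cases k with
      | zero =>
        simp only [Set.mem_setOf_eq, Set.mem_insert_iff, Set.mem_image]
        constructor
        · intro _; exact Or.inl trivial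
        · intro _
          exact ⟨by simp, fun hm => hc (isRLMax_cons_zero.mp hm)⟩
      | succ k' =>
        simp only [Set.mem_setOf_eq, Set.mem_insert_iff, Set.mem_image, length_cons]
        constructor
        · rintro ⟨hlt, hmax⟩
          exact Or.inr ⟨k', ⟨by omega, fun hm => hmax (isRLMax_cons_succ.mpr hm)⟩, rfl⟩
        · rintro (h0 | ⟨a, ⟨ha, hm⟩, hk⟩)
          · omega
          · obtain rfl : a = k' := by omega
            exact ⟨by omega, fun hmm => hm (isRLMax_cons_succ.mp hmm)⟩
    rw [hset, Set.ncard_insert_of_notMem (by simp) (hfin.image _),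
      Set.ncard_image_of_injective _ (fun a b hab => by omega), if_neg hc]
    omega

lemma shortCount_nil : shortCount [] = 0 := by
  unfold shortCount
  convert Set.ncard_empty ℕ
  ext k; simp

lemma shortCount_append_le (F B : List ℕ) :
    shortCount (F ++ B) ≤ F.length + shortCount B := by
  induction F with
  | nil => simp
  | cons a F ih =>
    rw [cons_append, shortCount_cons]
    simp only [length_cons]
    split <;> omega

lemma shortCount_append_lt (F B : List ℕ) (hex : ∃ k < F.length, IsRLMax (F ++ B) k) :
    shortCount (F ++ B) < F.length + shortCount B := by
  induction F with
  | nil => obtain ⟨k, hk, -⟩ := hex; simp at hk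
  | cons a F ih =>
    obtain ⟨k, hk, hmax⟩ := hex
    rw [cons_append, shortCount_cons]
    rw [cons_append] at hmax
    cases k with
    | zero =>
      rw [if_pos (isRLMax_cons_zero.mp hmax)]
      have := shortCount_append_le F B
      simp only [length_cons]
      omega
    | succ k' =>
      have hm : IsRLMax (F ++ B) k' := isRLMax_cons_succ.mp hmax
      have := ih ⟨k', by simpa using hk, hm⟩
      simp only [length_cons]
      split <;> omega

lemma shortCount_append_big {F B : List ℕ} (hb : ∀ y ∈ F, ∃ z ∈ B, y < z) :
    shortCount (F ++ B) = F.length + shortCount B := by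
  induction F with
  | nil => simp
  | cons a F ih =>
    rw [cons_append, shortCount_cons, ih (fun y hy => hb y (mem_cons_of_mem _ hy))]
    rw [if_neg]
    · simp only [length_cons]; omega
    · intro hall
      obtain ⟨z, hz, haz⟩ := hb a (mem_cons_self)
      exact absurd (hall z (mem_append_right _ hz)) (by omega)

-- ## pattern lemmas

lemma contains132_of {l : List ℕ} {a b c : ℕ} (hs : [a, b, c].Sublist l)
    (h1 : a < c) (h2 : c < b) : ContainsPat l [1, 3, 2] := by
  refine ⟨[a, b, c], hs, by simp [OrderIsoList], ?_⟩
  intro i j hij hj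
  simp only [length_cons, length_nil] at hj
  interval_cases j <;> interval_cases i <;> simp [List.getD] <;> omega

lemma exists_of_contains132 {l : List ℕ} (hnd : l.Nodup) (h : ContainsPat l [1, 3, 2]) :
    ∃ a b c, [a, b, c].Sublist l ∧ a < c ∧ c < b := by
  obtain ⟨s, hs, hlen, hrel⟩ := h
  have h3 : s.length = 3 := by simpa using hlen
  obtain ⟨a, b, c, rfl⟩ : ∃ a b c, s = [a, b, c] := by
    match s, h3 with
    | [a, b, c], _ => exact ⟨a, b, c, rfl⟩
  have hac : a < c := by
    have := (hrel 0 2 (by omega) (by simp)).mpr (by simp [List.getD])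
    simpa [List.getD] using this
  have hnbc : ¬ b < c := by
    intro hh
    have := (hrel 1 2 (by omega) (by simp)).mp (by simpa [List.getD] using hh)
    simp [List.getD] at this
  have hnds : ([a, b, c] : List ℕ).Nodup := hs.nodup hnd
  have hbc : b ≠ c := by simp at hnds; tauto
  exact ⟨a, b, c, hs, hac, by omega⟩

lemma containsPat_sublist {s l p : List ℕ} (hsl : s.Sublist l) (h : ContainsPat s p) :
    ContainsPat l p := by
  obtain ⟨t, ht, hiso⟩ := h
  exact ⟨t, ht.trans hsl, hiso⟩

lemma avoid_insert {π : List ℕ} {n i m : ℕ}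
    (hmem : ∀ x ∈ π, x < n + 1) (hnd : π.Nodup) (hπ : AvoidsPat π [1, 3, 2])
    (hpred : ∀ y ∈ (π.drop i).take m, ∀ x ∈ π.take i, y < x) :
    AvoidsPat (π.take i ++ (n + 1) :: (π.drop i).take m) [1, 3, 2] := by
  set P := π.take i with hP
  set T := (π.drop i).take m with hT
  intro hcon
  have hPT : (P ++ T).Sublist π := by
    have h1 : T.Sublist (π.drop i) := take_sublist _ _
    have h2 : P ++ T <+ P ++ π.drop i := (Sublist.refl P).append h1
    rwa [hP, take_append_drop] at h2
  have hPmem : ∀ x ∈ P, x < n + 1 := fun x hx => hmem x (take_subset _ _ hx)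
  have hTmem : ∀ x ∈ T, x < n + 1 := fun x hx =>
    hmem x (drop_subset _ _ (take_subset _ _ hx))
  have hndA : (P ++ (n + 1) :: T).Nodup := by
    rw [nodup_append]
    have hndPT : (P ++ T).Nodup := hPT.nodup hnd
    rw [nodup_append] at hndPT
    refine ⟨hndPT.1, ?_, ?_⟩
    · rw [nodup_cons]
      exact ⟨fun hmm => by have := hTmem _ hmm; omega, hndPT.2.1⟩
    · intro x hxP y hxT
      rcases mem_cons.mp hxT with rfl | hxT
      · have := hPmem _ hxP; omega
      · exact hndPT.2.2 x hxP y hxT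
  obtain ⟨a, b, c, hs, hac, hcb⟩ := exists_of_contains132 hndA hcon
  obtain ⟨s₁, s₂, heq, h1, h2⟩ := sublist_append_iff.mp hs
  rcases sublist_cons_iff.mp h2 with h2T | ⟨r, hr, hrT⟩
  · -- pattern avoids the new max entirely
    have : [a, b, c] <+ P ++ T := heq ▸ (h1.append h2T)
    exact hπ (containsPat_sublist hPT (contains132_of this hac hcb))
  · subst hr
    rcases s₁ with _ | ⟨a', s₁⟩
    · -- a = n+1
      simp only [nil_append, cons.injEq] at heq
      obtain ⟨rfl, hr2⟩ := heq
      have hcr : c ∈ r := by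
        rw [← hr2]; exact mem_cons_of_mem _ (mem_cons_self)
      have := hTmem c (hrT.subset hcr)
      omega
    · rcases s₁ with _ | ⟨b', s₁⟩
      · -- s₁ = [a], b = n+1, c ∈ T
        simp only [cons_append, nil_append, cons.injEq] at heq
        obtain ⟨rfl, rfl, hcr⟩ := heq
        have haP : a ∈ P := h1.subset (mem_cons_self)
        have hcT : c ∈ T := by
          have : c ∈ r := by rw [← hcr]; exact mem_cons_self
          exact hrT.subset this
        exact absurd (hpred c hcT a haP) (by omega)
      · rcases s₁ with _ | ⟨c', s₁⟩
        · -- c = n+1, but b ∈ P so b < n+1, contradicting c < b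
          simp only [cons_append, nil_append, cons.injEq] at heq
          obtain ⟨rfl, rfl, rfl, -⟩ := heq
          have hbP : b ∈ P := h1.subset (mem_cons_of_mem _ (mem_cons_self))
          have := hPmem b hbP
          omega
        · -- s₁ too long
          simp only [cons_append, cons.injEq] at heq
          obtain ⟨-, -, -, habs⟩ := heq
          exact absurd habs.symm (by simp)

-- ## characterization of insStep

lemma insStep_spec {n : ℕ} {π : List ℕ} (h : IsPermList n π) (ha : AvoidsPat π [1, 3, 2])
    {i : ℕ} (hi : i ≤ n) :
    ∃ t, i + t ≤ n ∧
      insStep [1, 3, 2] π i = standardize (π.take i ++ (n + 1) :: (π.drop i).take t) ∧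
      (∀ y ∈ (π.drop i).take t, ∀ x ∈ π.take i, y < x) := by
  have hlen : π.length = n := h.length_eq.trans (by simp)
  have hnd : π.Nodup := h.nodup_iff.mpr (nodup_range' (s := 1) (n := n))
  have hmem : ∀ x ∈ π, x < n + 1 := by
    intro x hx
    have := h.mem_iff.mp hx
    rw [mem_range'] at this
    obtain ⟨k, hk, rfl⟩ := this
    omega
  set K := Nat.findGreatest (fun k => AvoidsPat ((insertMax π i).take k) [1, 3, 2])
    (insertMax π i).length with hK
  have hstep : insStep [1, 3, 2] π i = standardize ((insertMax π i).take K) := rfl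
  have hLeq : insertMax π i = π.take i ++ (n + 1) :: π.drop i := by rw [insertMax, hlen]
  have hLlen : (insertMax π i).length = n + 1 := by
    simp [insertMax, hlen]; omega
  have hPi1 : AvoidsPat ((insertMax π i).take (i + 1)) [1, 3, 2] := by
    have e : (insertMax π i).take (i + 1) = π.take i ++ (n + 1) :: (π.drop i).take 0 := by
      rw [hLeq, show i + 1 = (π.take i).length + 1 by simp [length_take]; omega,
        take_append]
      simp
    rw [e]
    exact avoid_insert hmem hnd ha (by simp)
  have hK1 : i + 1 ≤ K := Nat.le_findGreatest (by rw [hLlen]; omega) hPi1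
  have hKle : K ≤ n + 1 := hLlen ▸ Nat.findGreatest_le _
  have htake : (insertMax π i).take K =
      π.take i ++ (n + 1) :: (π.drop i).take (K - i - 1) := by
    conv_lhs => rw [hLeq, show K = (π.take i).length + (K - i - 1 + 1) by
      simp [length_take]; omega, take_length_add_append, take_succ_cons]
  have hAK : AvoidsPat (π.take i ++ (n + 1) :: (π.drop i).take (K - i - 1)) [1, 3, 2] := by
    have hspec := Nat.findGreatest_spec
      (P := fun k => AvoidsPat ((insertMax π i).take k) [1, 3, 2])
      (m := i + 1) (n := (insertMax π i).length) (by rw [hLlen]; omega) hPi1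
    rw [← hK] at hspec
    rw [← htake]
    exact hspec
  have hdisj : Disjoint (π.take i) (π.drop i) := by
    have hnd2 := hnd
    rw [← take_append_drop i π, nodup_append] at hnd2
    exact fun x hx1 hx2 => hnd2.2.2 x hx1 x hx2 rfl
  have hpred : ∀ y ∈ (π.drop i).take (K - i - 1), ∀ x ∈ π.take i, y < x := by
    intro y hy x hx
    by_contra hyx
    push_neg at hyx
    have hxy : x ≠ y := fun he => hdisj hx (take_subset _ _ (he ▸ hy))
    have hyn : y < n + 1 := hmem y (drop_subset _ _ (take_subset _ _ hy))
    have hsub : [x, n + 1, y] <+ π.take i ++ (n + 1) :: (π.drop i).take (K - i - 1) := by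
      have h1 : [x] <+ π.take i := singleton_sublist.mpr hx
      have h2 : (n + 1) :: [y] <+ (n + 1) :: (π.drop i).take (K - i - 1) :=
        (singleton_sublist.mpr hy).cons₂ _
      exact h1.append h2
    exact hAK (contains132_of hsub (by omega) hyn)
  exact ⟨K - i - 1, by omega, by rw [hstep, htake], hpred⟩

lemma insStep_stats {n : ℕ} {π : List ℕ} (h : IsPermList n π) (ha : AvoidsPat π [1, 3, 2])
    {i : ℕ} (hi : i ≤ n) :
    ∃ t, i + t ≤ n ∧
      (insStep [1, 3, 2] π i).length = i + 1 + t ∧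
      shortCount (insStep [1, 3, 2] π i) = i + shortCount ((π.drop i).take t) ∧
      (∀ y ∈ (π.drop i).take t, ∀ x ∈ π.take i, y < x) := by
  have hlen : π.length = n := h.length_eq.trans (by simp)
  have hmem : ∀ x ∈ π, x < n + 1 := by
    intro x hx
    have := h.mem_iff.mp hx
    rw [mem_range'] at this
    obtain ⟨k, hk, rfl⟩ := this
    omega
  obtain ⟨t, htn, heq, hpred⟩ := insStep_spec h ha hi
  refine ⟨t, htn, ?_, ?_, hpred⟩
  · rw [heq, std_length]
    simp [length_take, length_drop, hlen]
    omega
  · rw [heq, shortCount_std]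
    have hb : ∀ y ∈ π.take i, ∃ z ∈ (n + 1) :: (π.drop i).take t, y < z :=
      fun y hy => ⟨n + 1, mem_cons_self, hmem y (take_subset _ _ hy)⟩
    rw [shortCount_append_big hb, shortCount_cons,
      if_pos (fun y hy => hmem y (drop_subset _ _ (take_subset _ _ hy)))]
    simp [length_take, hlen]
    omega

lemma exists_list_max {F : List ℕ} (h : F ≠ []) : ∃ a ∈ F, ∀ b ∈ F, b ≤ a := by
  induction F with
  | nil => exact absurd rfl h
  | cons x F ih =>
    rcases eq_or_ne F [] with rfl | hF
    · exact ⟨x, mem_cons_self, by simp⟩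
    · obtain ⟨a, ha, hab⟩ := ih hF
      rcases le_total a x with hax | hxa
      · refine ⟨x, mem_cons_self, ?_⟩
        intro b hb
        rcases mem_cons.mp hb with rfl | hb
        · exact le_refl _
        · exact (hab b hb).trans hax
      · refine ⟨a, mem_cons_of_mem _ ha, ?_⟩
        intro b hb
        rcases mem_cons.mp hb with rfl | hb
        · exact hxa
        · exact hab b hb


/-- For a 132-avoiding permutation `π` of length `n`, the `n+1` outputs of the insertion
steps all have pairwise distinct pairs (length, number of short values); i.e. they all lie
in different sets `A(m,s)`. -/
theorem insStep_classes_distinct (n : ℕ) (π : List ℕ)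
    (h : IsPermList n π) (ha : AvoidsPat π [1, 3, 2]) :
    ∀ i j, i ≤ n → j ≤ n →
      ((insStep [1, 3, 2] π i).length, shortCount (insStep [1, 3, 2] π i)) =
        ((insStep [1, 3, 2] π j).length, shortCount (insStep [1, 3, 2] π j)) →
      i = j := by
  have hlen : π.length = n := h.length_eq.trans (by simp)
  have hnd : π.Nodup := h.nodup_iff.mpr (nodup_range' (s := 1) (n := n))
  have key : ∀ i j, i ≤ n → j ≤ n → i < j →
      (insStep [1, 3, 2] π i).length = (insStep [1, 3, 2] π j).length →
      shortCount (insStep [1, 3, 2] π i) = shortCount (insStep [1, 3, 2] π j) → False := by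
    intro i j hi hj hij hL hS
    obtain ⟨ti, hti, hleni, hsci, -⟩ := insStep_stats h ha hi
    obtain ⟨tj, htj, hlenj, hscj, hpredj⟩ := insStep_stats h ha hj
    set Ti := (π.drop i).take ti with hTi
    set Tj := (π.drop j).take tj with hTjdef
    have hd : ti = tj + (j - i) := by omega
    set d := j - i with hdd
    have hdpos : 0 < d := by omega
    have hsum : shortCount Ti = d + shortCount Tj := by omega
    have hTj : Tj = Ti.drop d := by
      rw [hTjdef, hTi, drop_take, drop_drop]
      have e1 : ti - d = tj := by omega
      have e2 : i + d = j := by omega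
      rw [e1, e2]
    have hFsplit : Ti = Ti.take d ++ Tj := by rw [hTj, take_append_drop]
    set F := Ti.take d with hF
    have hTilen : Ti.length = ti := by
      rw [hTi]; simp [length_take, length_drop, hlen]; omega
    have hFlen : F.length = d := by
      rw [hF, length_take]; omega
    have hndTi : Ti.Nodup := ((take_sublist _ _).trans (drop_sublist _ _)).nodup hnd
    have hFne : F ≠ [] := by
      intro hFe
      rw [hFe] at hFlen
      simp at hFlen
      omega
    obtain ⟨M, hMF, hMmax⟩ := exists_list_max hFne
    obtain ⟨k, hkF, hkM⟩ := mem_iff_getElem.mp hMF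
    have hkd : k < d := by rwa [hFlen] at hkF
    have hkTi : k < Ti.length := by omega
    have hTik : Ti[k] = M := by
      rw [← hkM]
      exact getElem_take.symm
    have hMπj : M ∈ π.take j := by
      have hFeq : F = (π.drop i).take d := by
        rw [hF, hTi, take_take]
        congr 1
        omega
      have hsplit : π.take j = π.take i ++ (π.drop i).take d := by
        rw [show j = i + d by omega, take_add]
      rw [hsplit]
      exact mem_append_right _ (hFeq ▸ hMF)
    have hRL : IsRLMax Ti k := by
      intro j' hkj' hj'l
      rw [getD_eq_getElem _ _ hj'l, getD_eq_getElem _ _ hkTi, hTik]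
      rcases lt_or_ge j' d with hj'd | hj'd
      · have hj'F : j' < F.length := by omega
        have hjF : Ti[j'] ∈ F := by
          have h' : F[j']'hj'F = Ti[j']'hj'l := getElem_take
          exact h' ▸ getElem_mem hj'F
        have hle : Ti[j'] ≤ M := hMmax _ hjF
        have hne : Ti[j'] ≠ M := by
          intro he
          have : Ti[j'] = Ti[k] := by rw [he, hTik]
          have := (hndTi.getElem_inj_iff).mp this
          omega
        omega
      · have hmem' : Ti[j'] ∈ Tj := by
          rw [hTj]
          have hlt : j' - d < (Ti.drop d).length := by simp [length_drop]; omega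
          have he : (Ti.drop d)[j' - d] = Ti[j'] := by
            rw [getElem_drop]
            congr 1
            omega
          exact he ▸ getElem_mem hlt
        exact hpredj _ hmem' M hMπj
    have hlt := shortCount_append_lt F Tj ⟨k, by omega, by rw [← hFsplit]; exact hRL⟩
    rw [← hFsplit] at hlt
    omega
  intro i j hi hj heq
  have h1 : (insStep [1, 3, 2] π i).length = (insStep [1, 3, 2] π j).length :=
    congrArg Prod.fst heq
  have h2 : shortCount (insStep [1, 3, 2] π i) = shortCount (insStep [1, 3, 2] π j) :=
    congrArg Prod.snd heq
  rcases Nat.lt_trichotomy i j with hij | rfl | hij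
  · exact (key i j hi hj hij h1 h2).elim
  · rfl
  · exact (key j i hj hi hij h1.symm h2.symm).elim
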